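/- arXiv:1612.03722 — 2 statements merged into one kernel-verified Lean document; each statement's English description precedes it below -/
import Mathlib

section
/- In ℝ^d with d ≥ 2: given x1, x2 ∈ ℝ^d with |x1 - x2| ≥ ε0 > 0, R > 0, t > 0, and 0 < ε < ε0, the set K of relative velocities w ∈ B_{2R} such that |x1 - x2 - u w| ≤ ε for some u ∈ [0, t] has Lebesgue measure at most C R^d ( (ε/ε0)^{d-1} + (R t)^d ε^{d-1} / ε0^d ) for a constant C depending only on d. -/
open MeasureTheory

open scoped RealInnerProductSpace in
/-- Volume of a "box" determined by coordinate bounds along an orthonormal basis. -/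
lemma relative_velocity_box_volume {d : ℕ}
    (B : OrthonormalBasis (Fin d) ℝ (EuclideanSpace ℝ (Fin d))) (c : Fin d → ℝ) :
    volume {w : EuclideanSpace ℝ (Fin d) | ∀ i, |⟪B i, w⟫| ≤ c i} =
      ∏ i, ENNReal.ofReal (2 * c i) := by
  have hset : {w : EuclideanSpace ℝ (Fin d) | ∀ i, |⟪B i, w⟫| ≤ c i} =
      (⇑((MeasurableEquiv.toLp 2 (Fin d → ℝ)).symm) ∘ ⇑B.repr) ⁻¹'
        (Set.univ.pi fun i => Set.Icc (-(c i)) (c i)) := by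
    ext w
    have h : ∀ i, ((MeasurableEquiv.toLp 2 (Fin d → ℝ)).symm) (B.repr w) i = ⟪B i, w⟫ := by
      intro i; rw [← B.repr_apply_apply]; rfl
    simp only [Set.mem_preimage, Set.mem_pi, Set.mem_univ, forall_true_left, Set.mem_Icc,
      Function.comp_apply, h, Set.mem_setOf_eq, abs_le]
  rw [hset,
    ((EuclideanSpace.volume_preserving_symm_measurableEquiv_toLp (Fin d)).comp
      B.measurePreserving_repr).measure_preimage
      (MeasurableSet.univ_pi fun i => measurableSet_Icc).nullMeasurableSet,
    volume_pi_pi]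
  simp [Real.volume_Icc, sub_neg_eq_add, two_mul]

open scoped RealInnerProductSpace in
/-- Measure estimate for the set of relative velocities leading to a collision
within time `t` of two hard spheres of diameter `ε` starting at distance `≥ ε0`. -/
theorem relative_velocity_collision_set_measure (d : ℕ) (hd : 2 ≤ d) :
    ∃ C > 0, ∀ (x1 x2 : EuclideanSpace ℝ (Fin d)) (ε0 R t ε : ℝ),
      0 < ε0 → ε0 ≤ ‖x1 - x2‖ → 0 < R → 0 < t → 0 < ε → ε < ε0 →
      volume {w : EuclideanSpace ℝ (Fin d) | ‖w‖ ≤ 2 * R ∧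
          ∃ u ∈ Set.Icc (0 : ℝ) t, ‖x1 - x2 - u • w‖ ≤ ε} ≤
        ENNReal.ofReal (C * R ^ d *
          ((ε / ε0) ^ (d - 1) + (R * t) ^ d * ε ^ (d - 1) / ε0 ^ d)) := by
  refine ⟨8 ^ d, by positivity, ?_⟩
  intro x1 x2 ε0 R t ε hε0 hx hR ht hε hεε0
  have : NeZero d := ⟨by omega⟩
  obtain ⟨e, hde⟩ : ∃ e, d = e + 1 := ⟨d - 1, by omega⟩
  have hd1 : d - 1 = e := by omega
  set x := x1 - x2 with hxdef
  have hxn : (0:ℝ) < ‖x‖ := lt_of_lt_of_le hε0 hx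
  set v : EuclideanSpace ℝ (Fin d) := ‖x‖⁻¹ • x with hvdef
  have hvnorm : ‖v‖ = 1 := by
    rw [hvdef, norm_smul, norm_inv, norm_norm, inv_mul_cancel₀ hxn.ne']
  have horth : Orthonormal ℝ (({0} : Set (Fin d)).restrict (fun _ => v)) := by
    rw [orthonormal_iff_ite]
    intro i j
    rw [Subsingleton.elim i j, if_pos rfl, Set.restrict, Set.domRestrict_apply, real_inner_self_eq_norm_sq,
      hvnorm, one_pow]
  obtain ⟨B, hB⟩ := horth.exists_orthonormalBasis_extension_of_card_eq
    (by simp [finrank_euclideanSpace_fin])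
  have hB0 : B 0 = v := hB 0 rfl
  -- general coordinate bound
  have hcoord : ∀ (w : EuclideanSpace ℝ (Fin d)) i, |⟪B i, w⟫| ≤ ‖w‖ := by
    intro w i
    calc |⟪B i, w⟫| ≤ ‖B i‖ * ‖w‖ := abs_real_inner_le_norm _ _
      _ = ‖w‖ := by rw [B.orthonormal.1 i, one_mul]
  set T : ℝ := (R * t) ^ d * ε ^ (d - 1) / ε0 ^ d with hTdef
  have hT : 0 ≤ T := by positivity
  set q : ℝ := ε / ε0 with hqdef
  have hq : 0 ≤ q := by positivity
  have hprod_aux : ∀ b : ℝ, 0 < b → (∏ i, ENNReal.ofReal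
      (2 * (if i = (0 : Fin d) then 2 * R else b))) =
      ENNReal.ofReal ((4 * R) * (2 * b) ^ e) := by
    intro b hb
    rw [← ENNReal.ofReal_prod_of_nonneg (fun i _ => by positivity)]
    congr 1
    rw [← Finset.mul_prod_erase Finset.univ _ (Finset.mem_univ (0 : Fin d)), if_pos rfl]
    have hconst : ∀ i ∈ Finset.univ.erase (0 : Fin d),
        2 * (if i = (0 : Fin d) then 2 * R else b) = 2 * b := by
      intro i hi
      rw [if_neg (Finset.mem_erase.1 hi).1]
    rw [Finset.prod_congr rfl hconst, Finset.prod_const,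
      Finset.card_erase_of_mem (Finset.mem_univ _), Finset.card_univ, Fintype.card_fin, hd1]
    ring
  -- final real-number estimate, given the box bound
  have hfinal : ∀ b : ℝ, 0 < b → (4 * R) * (2 * b) ^ e ≤ (8:ℝ) ^ d * R ^ d * q ^ e →
      volume {w : EuclideanSpace ℝ (Fin d) | ∀ i, |⟪B i, w⟫| ≤
        (if i = (0 : Fin d) then 2 * R else b)} ≤
      ENNReal.ofReal ((8:ℝ) ^ d * R ^ d * (q ^ (d - 1) + T)) := by
    intro b hbpos hb
    rw [relative_velocity_box_volume B _, hprod_aux b hbpos]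
    apply ENNReal.ofReal_le_ofReal
    have h8R : (0:ℝ) ≤ (8:ℝ) ^ d * R ^ d := by positivity
    have : (8:ℝ) ^ d * R ^ d * (q ^ (d-1) + T) =
        (8:ℝ) ^ d * R ^ d * q ^ e + (8:ℝ) ^ d * R ^ d * T := by rw [hd1]; ring
    rw [this]
    linarith [mul_nonneg h8R hT]
  by_cases hcase : ε < ε0 / 2
  · -- main case: small ε; transverse coordinates are ≤ 4Rε/ε0
    refine le_trans (measure_mono ?_) (hfinal (4 * R * ε / ε0) (by positivity) ?_)
    · rintro w ⟨hw, u, ⟨hu0, hut⟩, hcol⟩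
      intro i
      by_cases hi : i = 0
      · rw [if_pos hi, hi]
        exact le_trans (hcoord w 0) hw
      · rw [if_neg hi]
        -- u ‖w‖ ≥ ε0 - ε
        have h1 : ‖x‖ - ‖u • w‖ ≤ ε := le_trans (norm_sub_norm_le _ _) hcol
        have h2 : ‖u • w‖ = u * ‖w‖ := by
          rw [norm_smul, Real.norm_of_nonneg hu0]
        have huw : ε0 - ε ≤ u * ‖w‖ := by rw [← h2]; linarith
        have hupos : 0 < u := by
          by_contra hcon
          push_neg at hcon
          have := mul_nonpos_of_nonpos_of_nonneg hcon (norm_nonneg w)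
          linarith
        have hu_lb : ε0 ≤ u * (4 * R) := by nlinarith [norm_nonneg w]
        -- B i is orthogonal to x
        have hix : ⟪B i, x⟫ = 0 := by
          have hxv : x = ‖x‖ • v := by
            rw [hvdef, smul_smul, mul_inv_cancel₀ hxn.ne', one_smul]
          rw [hxv, real_inner_smul_right]
          have : ⟪B i, B 0⟫ = 0 := B.orthonormal.2 hi
          rw [hB0] at this
          rw [this, mul_zero]
        have hkey : u * |⟪B i, w⟫| ≤ ε := by
          have : u * ⟪B i, w⟫ = -⟪B i, x - u • w⟫ := by
            rw [inner_sub_right, hix, real_inner_smul_right]; ring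
          have habs : |u * ⟪B i, w⟫| ≤ ε := by
            rw [this, abs_neg]
            calc |⟪B i, x - u • w⟫| ≤ ‖B i‖ * ‖x - u • w‖ := abs_real_inner_le_norm _ _
              _ = ‖x - u • w‖ := by rw [B.orthonormal.1 i, one_mul]
              _ ≤ ε := hcol
          rwa [abs_mul, abs_of_pos hupos] at habs
        rw [le_div_iff₀ hε0]
        nlinarith [mul_le_mul_of_nonneg_left hu_lb (abs_nonneg ⟪B i, w⟫),
          mul_le_mul_of_nonneg_left hkey (by linarith : (0:ℝ) ≤ 4 * R)]
    · -- (4R)(2·4Rε/ε0)^e ≤ 8^d R^d q^e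
      have hq' : 2 * (4 * R * ε / ε0) = 8 * R * q := by
        rw [hqdef]; ring
      rw [hq', hde]
      have hLHS : 4 * R * (8 * R * q) ^ e = 4 * (8 ^ e * (R ^ (e+1) * q ^ e)) := by
        rw [mul_pow, mul_pow, pow_succ]; ring
      have hRHS : (8:ℝ) ^ (e+1) * R ^ (e+1) * q ^ e = 8 * (8 ^ e * (R ^ (e+1) * q ^ e)) := by
        rw [pow_succ]; ring
      have hP : (0:ℝ) ≤ 8 ^ e * (R ^ (e+1) * q ^ e) := by positivity
      rw [hLHS, hRHS]
      linarith
  · -- ε ≥ ε0/2: the trivial box of side 4R suffices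
    push_neg at hcase
    refine le_trans (measure_mono ?_) (hfinal (2 * R) (by positivity) ?_)
    · rintro w ⟨hw, -⟩ i
      split <;> exact le_trans (hcoord w i) hw
    · -- (4R)^{e+1} ≤ 8^{e+1} R^{e+1} q^e, using q ≥ 1/2
      have hqhalf : (1:ℝ)/2 ≤ q := by
        rw [hqdef, le_div_iff₀ hε0]; linarith
      have h1 : ((1:ℝ)/2) ^ e ≤ q ^ e := pow_le_pow_left₀ (by norm_num) hqhalf e
      have h2 : (4:ℝ) * R * (2 * (2*R)) ^ e = 4 ^ (e+1) * R ^ (e+1) := by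
        rw [show (2:ℝ) * (2*R) = 4 * R from by ring, mul_pow, pow_succ, pow_succ]; ring
      have h3 : (4:ℝ) ^ (e+1) * R ^ (e+1) ≤ (8:ℝ) ^ (e+1) * R ^ (e+1) * ((1:ℝ)/2) ^ e := by
        have h8 : (8:ℝ) * (1/2) = 4 := by norm_num
        have : (8:ℝ) ^ (e+1) * ((1:ℝ)/2) ^ e = 8 * 4 ^ e := by
          calc (8:ℝ) ^ (e+1) * ((1:ℝ)/2) ^ e = ((8:ℝ) * (1/2)) ^ e * 8 := by
                rw [mul_pow, pow_succ]; ring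
            _ = 8 * 4 ^ e := by rw [h8]; ring
        have h4 : (4:ℝ) ^ (e+1) = 4 * 4 ^ e := by rw [pow_succ]; ring
        have hRp : (0:ℝ) ≤ R ^ (e+1) := by positivity
        have h4e : (0:ℝ) ≤ 4 ^ e := by positivity
        calc (4:ℝ) ^ (e+1) * R ^ (e+1) = 4 * 4 ^ e * R ^ (e+1) := by rw [h4]
          _ ≤ 8 * 4 ^ e * R ^ (e+1) :=
              mul_le_mul_of_nonneg_right
                (mul_le_mul_of_nonneg_right (by norm_num) h4e) hRp
          _ = (8:ℝ) ^ (e+1) * ((1:ℝ)/2) ^ e * R ^ (e+1) := by rw [this]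
          _ = (8:ℝ) ^ (e+1) * R ^ (e+1) * ((1:ℝ)/2) ^ e := by ring
      have h5 : (8:ℝ) ^ (e+1) * R ^ (e+1) * ((1:ℝ)/2) ^ e ≤
          (8:ℝ) ^ (e+1) * R ^ (e+1) * q ^ e := by
        have : (0:ℝ) ≤ (8:ℝ) ^ (e+1) * R ^ (e+1) := by positivity
        exact mul_le_mul_of_nonneg_left h1 this
      rw [hde, h2]
      linarith
end

section
/- In ℝ^d with d ≥ 2: given x1, x2 ∈ ℝ^d, R > 0, δ > 0 and ε0 > 0, the set of relative velocities w ∈ B_{2R} such that |(x1 - x2) - u w| ≤ ε0 for some u ≥ δ has Lebesgue measure at most C R^d (ε0/(R δ))^{d-1} for a constant C depending only on d (here one can also use the bound C' ε0^{d-1} R / δ^{d-1}). -/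
open MeasureTheory

/-- Measure estimate for the set of relative velocities keeping two particles
within distance `ε0` at some time `u ≥ δ`. -/
theorem relative_velocity_late_closeness_set_measure (d : ℕ) (hd : 2 ≤ d) :
    ∃ C > 0, ∀ (x1 x2 : EuclideanSpace ℝ (Fin d)) (R δ ε0 : ℝ),
      0 < R → 0 < δ → 0 < ε0 →
      volume {w : EuclideanSpace ℝ (Fin d) | ‖w‖ ≤ 2 * R ∧
          ∃ u : ℝ, δ ≤ u ∧ ‖x1 - x2 - u • w‖ ≤ ε0} ≤
        ENNReal.ofReal (C * R ^ d * (ε0 / (R * δ)) ^ (d - 1)) := by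
  have hd0 : 0 < d := by omega
  haveI : NeZero d := ⟨by omega⟩
  refine ⟨2 ^ (d + 1), by positivity, fun x1 x2 R δ ε0 hR hδ hε0 => ?_⟩
  set y : EuclideanSpace ℝ (Fin d) := x1 - x2 with hy
  -- get an orthonormal basis whose vectors b i, i ≠ 0, are orthogonal to y
  obtain ⟨b, hb⟩ : ∃ b : OrthonormalBasis (Fin d) ℝ (EuclideanSpace ℝ (Fin d)),
      ∀ i : Fin d, i ≠ 0 → inner ℝ (b i) y = (0 : ℝ) := by
    rcases eq_or_ne y 0 with h0 | h0
    · exact ⟨EuclideanSpace.basisFun (Fin d) ℝ, fun i _ => by simp [h0]⟩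
    · have hcard : Module.finrank ℝ (EuclideanSpace ℝ (Fin d)) = Fintype.card (Fin d) := by
        simp
      have horth : Orthonormal ℝ (({0} : Set (Fin d)).restrict fun _ => ‖y‖⁻¹ • y) := by
        constructor
        · intro i
          show ‖‖y‖⁻¹ • y‖ = 1
          rw [norm_smul, norm_inv, norm_norm, inv_mul_cancel₀ (norm_ne_zero_iff.2 h0)]
        · intro i j hij
          exact absurd (Subsingleton.elim i j) hij
      obtain ⟨b, hb⟩ := horth.exists_orthonormalBasis_extension_of_card_eq hcard
      refine ⟨b, fun i hi => ?_⟩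
      have hy0 : y = ‖y‖ • b 0 := by
        rw [hb 0 rfl, smul_smul, mul_inv_cancel₀ (norm_ne_zero_iff.2 h0), one_smul]
      rw [hy0, real_inner_smul_right, b.orthonormal.2 hi, mul_zero]
  set r : Fin d → ℝ := fun i => if i = 0 then 2 * R else ε0 / δ with hr
  set T : Set (Fin d → ℝ) := Set.univ.pi fun i => Set.Icc (-(r i)) (r i) with hT
  have hTmeas : MeasurableSet T := MeasurableSet.univ_pi fun i => measurableSet_Icc
  -- the set is contained in the preimage of the box
  have hsub : {w : EuclideanSpace ℝ (Fin d) | ‖w‖ ≤ 2 * R ∧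
      ∃ u : ℝ, δ ≤ u ∧ ‖x1 - x2 - u • w‖ ≤ ε0} ⊆
      (fun w => (b.repr w : Fin d → ℝ)) ⁻¹' T := by
    rintro w ⟨hw, u, hu, hwu⟩
    intro i _
    have hrepr : b.repr w i = inner ℝ (b i) w := b.repr_apply_apply w i
    simp only [Set.mem_Icc, ← abs_le]
    rw [hrepr]
    rcases eq_or_ne i 0 with rfl | hi
    · simp only [hr, if_pos rfl]
      calc |inner ℝ (b 0) w| ≤ ‖b 0‖ * ‖w‖ := abs_real_inner_le_norm _ _
        _ = ‖w‖ := by rw [b.orthonormal.1 0, one_mul]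
        _ ≤ 2 * R := hw
    · simp only [hr, if_neg hi]
      have h1 : |inner ℝ (b i) (y - u • w)| ≤ ε0 := by
        calc |inner ℝ (b i) (y - u • w)| ≤ ‖b i‖ * ‖y - u • w‖ := abs_real_inner_le_norm _ _
          _ = ‖y - u • w‖ := by rw [b.orthonormal.1 i, one_mul]
          _ ≤ ε0 := hwu
      have h2 : inner ℝ (b i) (y - u • w) = -(u * inner ℝ (b i) w) := by
        rw [inner_sub_right, hb i hi, real_inner_smul_right]; ring
      rw [h2, abs_neg, abs_mul, abs_of_pos (lt_of_lt_of_le hδ hu)] at h1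
      rw [le_div_iff₀ hδ]
      calc |inner ℝ (b i) w| * δ ≤ |inner ℝ (b i) w| * u := by
            exact mul_le_mul_of_nonneg_left hu (abs_nonneg _)
        _ = u * |inner ℝ (b i) w| := mul_comm _ _
        _ ≤ ε0 := h1
  -- measure computation
  have hmp1 : MeasurePreserving (b.repr : EuclideanSpace ℝ (Fin d) →
      EuclideanSpace ℝ (Fin d)) volume volume := b.measurePreserving_repr
  have hmp2 := EuclideanSpace.volume_preserving_symm_measurableEquiv_toLp (Fin d)
  have hvol : volume ((fun w : EuclideanSpace ℝ (Fin d) =>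
      (b.repr w : Fin d → ℝ)) ⁻¹' T) = volume T := by
    have : (fun w : EuclideanSpace ℝ (Fin d) => (b.repr w : Fin d → ℝ)) =
        (MeasurableEquiv.toLp 2 (Fin d → ℝ)).symm ∘ b.repr := rfl
    rw [this, Set.preimage_comp,
      hmp1.measure_preimage ((hmp2.measurable hTmeas).nullMeasurableSet),
      hmp2.measure_preimage hTmeas.nullMeasurableSet]
  have hvolT : volume T = ENNReal.ofReal ((4 * R) * (2 * (ε0 / δ)) ^ (d - 1)) := by
    rw [hT, volume_pi_pi]
    have : ∀ i, volume (Set.Icc (-(r i)) (r i)) = ENNReal.ofReal (2 * r i) := by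
      intro i
      rw [Real.volume_Icc]
      congr 1
      ring
    simp only [this]
    rw [← ENNReal.ofReal_prod_of_nonneg]
    · congr 1
      rw [← Finset.mul_prod_erase Finset.univ _ (Finset.mem_univ (0 : Fin d))]
      have h1 : 2 * r 0 = 4 * R := by simp [hr]; ring
      have h2 : ∀ i ∈ Finset.univ.erase (0 : Fin d), 2 * r i = 2 * (ε0 / δ) := by
        intro i hi
        simp only [hr, if_neg (Finset.mem_erase.1 hi).1]
      rw [h1, Finset.prod_congr rfl h2, Finset.prod_const,
        Finset.card_erase_of_mem (Finset.mem_univ _), Finset.card_univ, Fintype.card_fin]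
    · intro i _
      have : 0 ≤ r i := by
        rcases eq_or_ne i 0 with rfl | hi
        · simp [hr]; positivity
        · simp [hr, if_neg hi]; positivity
      linarith
  have hfinal : (4 * R) * (2 * (ε0 / δ)) ^ (d - 1) =
      2 ^ (d + 1) * R ^ d * (ε0 / (R * δ)) ^ (d - 1) := by
    obtain ⟨m, rfl⟩ : ∃ m, d = m + 1 := ⟨d - 1, by omega⟩
    simp only [Nat.add_sub_cancel]
    field_simp
    have hRm : R ^ m * R⁻¹ ^ m = 1 := by rw [← mul_pow, mul_inv_cancel₀ hR.ne', one_pow]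
    linear_combination (-(R * ε0 ^ m * δ⁻¹ ^ m * 2 ^ m * 4)) * hRm
  calc volume {w : EuclideanSpace ℝ (Fin d) | ‖w‖ ≤ 2 * R ∧
        ∃ u : ℝ, δ ≤ u ∧ ‖x1 - x2 - u • w‖ ≤ ε0}
      ≤ volume ((fun w : EuclideanSpace ℝ (Fin d) => (b.repr w : Fin d → ℝ)) ⁻¹' T) :=
        measure_mono hsub
    _ = ENNReal.ofReal ((4 * R) * (2 * (ε0 / δ)) ^ (d - 1)) := by rw [hvol, hvolT]
    _ = _ := by rw [hfinal]
end
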